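/- Let d ≥ 1, β > 0, let g : ℝ^d × ℝ^d → ℝ be symmetric and measurable, let V : ℝ^d → ℝ be measurable, and let μ_β be a probability density on ℝ^d such that g∗μ_β is finite everywhere, g∗μ_β + V + (1/β) log μ_β = c_β everywhere for some constant c_β, and ∬ |g| dμ_β ⊗ dμ_β, ∫ |V| dμ_β, ∫ μ_β |log μ_β| are finite. Let μ be a probability density on ℝ^d with ∬ |g| d(μ + μ_β) ⊗ d(μ + μ_β) < ∞, ∫ |V| dμ < ∞, ∫ μ |log μ| < ∞, ∫ μ_β |log μ_β| < ∞, μ > 0 μ-almost everywhere, and ∫ |log(μ/μ_β)| dμ < ∞. Assume Z_{N,β}^V ∈ (0, ∞) for every N ≥ 1 and that (1/N) log K_{N,β}(μ_β) → 0 as N → ∞. Then lim_{N→∞} H_N( μ^{⊗N} | P_{N,β}^V ) = β ( 𝓔_β(μ) − 𝓔_β(μ_β) ). -/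

import Mathlib

open MeasureTheory
open scoped ENNReal NNReal

noncomputable section

/-- The modulated energy
`F_N(X_N, μ) = (1/(2N²)) Σ_{i≠j} g(x_i,x_j) − (1/N) Σ_i ∫ g(x_i,y) dμ(y)
  + (1/2) ∬ g dμ dμ`. -/
def modEnergy (d N : ℕ) (g : EuclideanSpace ℝ (Fin d) → EuclideanSpace ℝ (Fin d) → ℝ)
    (μ : Measure (EuclideanSpace ℝ (Fin d))) (X : Fin N → EuclideanSpace ℝ (Fin d)) : ℝ :=
  (1 / (2 * (N : ℝ) ^ 2)) * ∑ i : Fin N, ∑ j ∈ Finset.univ.erase i, g (X i) (X j)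
    - (1 / (N : ℝ)) * ∑ i : Fin N, ∫ y, g (X i) y ∂μ
    + (1 / 2) * ∫ x, ∫ y, g x y ∂μ ∂μ

/-- The partition function `K_{N,β}(μ) = ∫ exp(−βN F_N(X_N,μ)) dμ^{⊗N}(X_N)`. -/
def Kpart (d N : ℕ) (β : ℝ) (g : EuclideanSpace ℝ (Fin d) → EuclideanSpace ℝ (Fin d) → ℝ)
    (μ : Measure (EuclideanSpace ℝ (Fin d))) : ℝ :=
  ∫ X : Fin N → EuclideanSpace ℝ (Fin d),
    Real.exp (-(β * N * modEnergy d N g μ X)) ∂(Measure.pi fun _ => μ)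

/-- The modulated Gibbs measure `Q_{N,β}(μ)`, with density
`exp(−βN F_N(X_N,μ))/K_{N,β}(μ)` with respect to `μ^{⊗N}`. -/
def modGibbs (d N : ℕ) (β : ℝ) (g : EuclideanSpace ℝ (Fin d) → EuclideanSpace ℝ (Fin d) → ℝ)
    (μ : Measure (EuclideanSpace ℝ (Fin d))) : Measure (Fin N → EuclideanSpace ℝ (Fin d)) :=
  (Measure.pi fun _ => μ).withDensity fun X =>
    ENNReal.ofReal (Real.exp (-(β * N * modEnergy d N g μ X)) / Kpart d N β g μ)

/-- The normalized relative entropy `H_N(f | g) = (1/N) ∫ log(df/dg) df`. -/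
def relEnt {α : Type*} [MeasurableSpace α] (N : ℕ) (f g : Measure α) : ℝ :=
  (1 / (N : ℝ)) * ∫ x, Real.log ((f.rnDeriv g x).toReal) ∂f

/-- The modulated free energy
`E_N(f_N, μ) = (1/β) H_N(f_N | μ^{⊗N}) + ∫ F_N(X_N,μ) df_N(X_N)`. -/
def modFreeEnergy (d N : ℕ) (β : ℝ)
    (g : EuclideanSpace ℝ (Fin d) → EuclideanSpace ℝ (Fin d) → ℝ)
    (f : Measure (Fin N → EuclideanSpace ℝ (Fin d)))
    (μ : Measure (EuclideanSpace ℝ (Fin d))) : ℝ :=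
  (1 / β) * relEnt N f (Measure.pi fun _ => μ) + ∫ X, modEnergy d N g μ X ∂f

/-- The measure on `ℝ^d` with density `μ` with respect to Lebesgue measure. -/
def densMeasure (d : ℕ) (μ : EuclideanSpace ℝ (Fin d) → ℝ) :
    Measure (EuclideanSpace ℝ (Fin d)) :=
  volume.withDensity fun x => ENNReal.ofReal (μ x)

/-- The `N`-particle energy `𝓗_N(X_N) = Σᵢ V(xᵢ) + (1/(2N)) Σ_{i≠j} g(xᵢ,xⱼ)`. -/
def HamN (d N : ℕ) (g : EuclideanSpace ℝ (Fin d) → EuclideanSpace ℝ (Fin d) → ℝ)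
    (V : EuclideanSpace ℝ (Fin d) → ℝ) (X : Fin N → EuclideanSpace ℝ (Fin d)) : ℝ :=
  ∑ i : Fin N, V (X i)
    + (1 / (2 * (N : ℝ))) * ∑ i : Fin N, ∑ j ∈ Finset.univ.erase i, g (X i) (X j)

/-- The partition function `Z_{N,β}^V = ∫ exp(−β 𝓗_N) dX_N`. -/
def Zpart (d N : ℕ) (β : ℝ) (g : EuclideanSpace ℝ (Fin d) → EuclideanSpace ℝ (Fin d) → ℝ)
    (V : EuclideanSpace ℝ (Fin d) → ℝ) : ℝ :=
  ∫ X : Fin N → EuclideanSpace ℝ (Fin d), Real.exp (-(β * HamN d N g V X)) ∂volume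

/-- The Gibbs measure `P_{N,β}^V`, with density `exp(−β𝓗_N)/Z_{N,β}^V` with respect to
Lebesgue measure on `(ℝ^d)^N`. -/
def gibbs (d N : ℕ) (β : ℝ) (g : EuclideanSpace ℝ (Fin d) → EuclideanSpace ℝ (Fin d) → ℝ)
    (V : EuclideanSpace ℝ (Fin d) → ℝ) : Measure (Fin N → EuclideanSpace ℝ (Fin d)) :=
  volume.withDensity fun X =>
    ENNReal.ofReal (Real.exp (-(β * HamN d N g V X)) / Zpart d N β g V)

/-- The mean-field free energy
`𝓔_β(μ) = (1/2) ∬ g dμ dμ + ∫ V dμ + (1/β) ∫ μ log μ` of a probability density `μ`. -/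
def meanFE (d : ℕ) (β : ℝ) (g : EuclideanSpace ℝ (Fin d) → EuclideanSpace ℝ (Fin d) → ℝ)
    (V : EuclideanSpace ℝ (Fin d) → ℝ) (μ : EuclideanSpace ℝ (Fin d) → ℝ) : ℝ :=
  (1 / 2) * (∫ x, ∫ y, g x y ∂(densMeasure d μ) ∂(densMeasure d μ))
    + (∫ x, V x ∂(densMeasure d μ))
    + (1 / β) * ∫ x, Real.log (μ x) ∂(densMeasure d μ)

section AuxPi
open Measure Set

variable {α : Type*} [MeasurableSpace α]

theorem my_lintegral_pi_prod : ∀ {n : ℕ} (m : Fin n → Measure α)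
    (_ : ∀ i, SigmaFinite (m i)) (f : Fin n → α → ℝ≥0∞) (_ : ∀ i, Measurable (f i)),
    ∫⁻ X, ∏ i, f i (X i) ∂Measure.pi m = ∏ i, ∫⁻ x, f i x ∂(m i) := by
  intro n
  induction n with
  | zero =>
      intro m _ f _
      simp [lintegral_const, Measure.pi_univ]
  | succ n ih =>
      intro m hm f hf
      haveI := hm
      have hmp := measurePreserving_piFinSuccAbove m 0
      have key := hmp.lintegral_comp_emb
        (MeasurableEquiv.measurableEmbedding _)
        (fun z : α × (Fin n → α) => f 0 z.1 * ∏ j : Fin n, f j.succ (z.2 j))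
      have h1 : ∀ X : Fin (n+1) → α,
          f 0 ((MeasurableEquiv.piFinSuccAbove (fun _ => α) 0) X).1 *
            ∏ j : Fin n, f j.succ (((MeasurableEquiv.piFinSuccAbove (fun _ => α) 0) X).2 j)
          = ∏ i, f i (X i) := by
        intro X
        rw [Fin.prod_univ_succ]
        rfl
      rw [← funext h1] at *
      rw [key]
      simp only [Fin.zero_succAbove]
      have h2 : ∫⁻ (b : α × (Fin n → α)), f 0 b.1 * ∏ j : Fin n, f j.succ (b.2 j)
            ∂(m 0).prod (Measure.pi fun j : Fin n => m j.succ)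
          = (∫⁻ x, f 0 x ∂m 0) *
            ∫⁻ y : Fin n → α, ∏ j : Fin n, f j.succ (y j) ∂Measure.pi (fun j : Fin n => m j.succ) :=
        lintegral_prod_mul (hf 0).aemeasurable
          (Finset.measurable_prod Finset.univ
            (fun (j : Fin n) _ => (hf j.succ).comp (measurable_pi_apply j))).aemeasurable
      rw [h2, ih (fun j : Fin n => m j.succ) (fun j : Fin n => hm j.succ)
        (fun j : Fin n => f j.succ) (fun j : Fin n => hf j.succ), Fin.prod_univ_succ]

theorem my_pi_withDensity {n : ℕ} (m : Fin n → Measure α) [hm : ∀ i, SigmaFinite (m i)]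
    (f : Fin n → α → ℝ≥0∞) (hf : ∀ i, Measurable (f i))
    [hwd : ∀ i, SigmaFinite ((m i).withDensity (f i))] :
    Measure.pi (fun i => (m i).withDensity (f i))
      = (Measure.pi m).withDensity (fun X => ∏ i, f i (X i)) := by
  refine Measure.pi_eq (μ := fun i => (m i).withDensity (f i)) fun s hs => ?_
  rw [withDensity_apply _ (MeasurableSet.univ_pi hs)]
  rw [← lintegral_indicator (MeasurableSet.univ_pi hs)]
  have hind : ∀ X : Fin n → α,
      (univ.pi s).indicator (fun X => ∏ i, f i (X i)) X
        = ∏ i, (s i).indicator (f i) (X i) := by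
    intro X
    by_cases hX : X ∈ univ.pi s
    · rw [indicator_of_mem hX]
      exact Finset.prod_congr rfl fun i _ => (indicator_of_mem (hX i (Set.mem_univ i)) _).symm
    · rw [indicator_of_notMem hX]
      rw [mem_univ_pi] at hX
      push_neg at hX
      obtain ⟨i, hi⟩ := hX
      exact (Finset.prod_eq_zero (Finset.mem_univ i) (indicator_of_notMem hi _)).symm
  simp_rw [hind]
  rw [my_lintegral_pi_prod m hm _ (fun i => (hf i).indicator (hs i))]
  exact Finset.prod_congr rfl fun i _ => by
    rw [withDensity_apply _ (hs i), ← lintegral_indicator (hs i)]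

theorem my_pi_map_eval {n : ℕ} (m : Fin n → Measure α) [∀ i, IsProbabilityMeasure (m i)]
    (i : Fin n) : (Measure.pi m).map (Function.eval i) = m i := by
  ext s hs
  rw [Measure.map_apply (measurable_pi_apply i) hs, Set.eval_preimage, Measure.pi_pi]
  have hfn : ∀ k, (m k) (Function.update (fun _ => univ) i s k)
      = Function.update (fun _ : Fin n => (1 : ℝ≥0∞)) i ((m i) s) k := by
    intro k
    rcases eq_or_ne k i with rfl | hk
    · simp
    · simp [Function.update_of_ne hk, measure_univ]
  rw [Finset.prod_congr rfl (fun k _ => hfn k),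
    Finset.prod_update_of_mem (Finset.mem_univ i)]
  simp

theorem my_pi_map_pair {n : ℕ} (m : Fin n → Measure α) [∀ i, IsProbabilityMeasure (m i)]
    {i j : Fin n} (hij : i ≠ j) :
    (Measure.pi m).map (fun X => (X i, X j)) = (m i).prod (m j) := by
  refine (Measure.prod_eq (μ := m i) (ν := m j) fun s t hs ht => ?_).symm
  rw [Measure.map_apply ((measurable_pi_apply i).prodMk (measurable_pi_apply j)) (hs.prod ht)]
  have hpre : (fun X : Fin n → α => (X i, X j)) ⁻¹' (s ×ˢ t)
      = univ.pi (Function.update (Function.update (fun _ => (univ : Set α)) i s) j t) := by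
    ext X
    simp only [mem_preimage, mem_prod, mem_univ_pi, Function.update_apply]
    constructor
    · rintro ⟨h1, h2⟩ k
      rcases eq_or_ne k j with rfl | hkj
      · simp [h2]
      · rcases eq_or_ne k i with rfl | hki
        · simp [hkj, h1]
        · simp [hkj, hki]
    · intro h
      refine ⟨?_, ?_⟩
      · have := h i; simpa [hij] using this
      · have := h j; simpa using this
  rw [hpre, Measure.pi_pi]
  have hfn : ∀ k, (m k) (Function.update (Function.update (fun _ => univ) i s) j t k)
      = Function.update (Function.update (fun _ : Fin n => (1 : ℝ≥0∞)) i ((m i) s)) j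
          ((m j) t) k := by
    intro k
    rcases eq_or_ne k j with rfl | hkj
    · simp
    · rcases eq_or_ne k i with rfl | hki
      · simp [Function.update_of_ne hkj]
      · simp [Function.update_of_ne hkj, Function.update_of_ne hki, measure_univ]
  rw [Finset.prod_congr rfl (fun k _ => hfn k),
    Finset.prod_update_of_mem (Finset.mem_univ j), Finset.sdiff_singleton_eq_erase,
    Finset.prod_update_of_mem (Finset.mem_erase.2 ⟨hij, Finset.mem_univ i⟩)]
  simp [mul_comm]

theorem my_integrable_eval {n : ℕ} (m : Fin n → Measure α) [∀ i, IsProbabilityMeasure (m i)]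
    (i : Fin n) {F : α → ℝ} (hFm : Measurable F) (hF : Integrable F (m i)) :
    Integrable (fun X : Fin n → α => F (X i)) (Measure.pi m) := by
  rw [← my_pi_map_eval m i] at hF
  exact (integrable_map_measure hFm.aestronglyMeasurable
    (measurable_pi_apply i).aemeasurable).mp hF

theorem my_integral_eval {n : ℕ} (m : Fin n → Measure α) [∀ i, IsProbabilityMeasure (m i)]
    (i : Fin n) {F : α → ℝ} (hFm : Measurable F) :
    ∫ X, F (X i) ∂Measure.pi m = ∫ x, F x ∂(m i) := by
  conv_rhs => rw [← my_pi_map_eval m i]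
  rw [integral_map (measurable_pi_apply i).aemeasurable hFm.aestronglyMeasurable]

theorem my_integrable_pair {n : ℕ} (m : Fin n → Measure α) [∀ i, IsProbabilityMeasure (m i)]
    {i j : Fin n} (hij : i ≠ j) {F : α × α → ℝ} (hFm : Measurable F)
    (hF : Integrable F ((m i).prod (m j))) :
    Integrable (fun X : Fin n → α => F (X i, X j)) (Measure.pi m) := by
  rw [← my_pi_map_pair m hij] at hF
  exact (integrable_map_measure hFm.aestronglyMeasurable
    ((measurable_pi_apply i).prodMk (measurable_pi_apply j)).aemeasurable).mp hF

theorem my_integral_pair {n : ℕ} (m : Fin n → Measure α) [∀ i, IsProbabilityMeasure (m i)]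
    {i j : Fin n} (hij : i ≠ j) {F : α × α → ℝ} (hFm : Measurable F) :
    ∫ X, F (X i, X j) ∂Measure.pi m = ∫ z, F z ∂((m i).prod (m j)) := by
  conv_rhs => rw [← my_pi_map_pair m hij]
  rw [integral_map ((measurable_pi_apply i).prodMk (measurable_pi_apply j)).aemeasurable
    hFm.aestronglyMeasurable]

end AuxPi

theorem scalar_alg (n I J G c K b : ℝ) (hn : n ≠ 0) :
    (1 / n) * (n * I + (b * (n * J + 1 / (2 * n) * (n * (n - 1) * G)) + (n * c + K)))
      = I + b * J + b / 2 * G + c - b * G / 2 * (1 / n) + K / n := by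
  field_simp
  ring

/-- **Infinite-volume limit of the relative entropy with respect to the Gibbs measure.**
Under the stated integrability and characterization hypotheses on the thermal equilibrium
density `μ_β` and on the density `μ`, if `Z_{N,β}^V ∈ (0,∞)` for every `N ≥ 1` and
`(1/N) log K_{N,β}(μ_β) → 0`, then
`H_N(μ^{⊗N} | P_{N,β}^V) → β(𝓔_β(μ) − 𝓔_β(μ_β))` as `N → ∞`. -/
theorem stmt_18 (d : ℕ) (hd : 1 ≤ d) (β : ℝ) (hβ : 0 < β)
    (g : EuclideanSpace ℝ (Fin d) → EuclideanSpace ℝ (Fin d) → ℝ)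
    (hg_symm : ∀ x y, g x y = g y x)
    (hg_meas : Measurable (Function.uncurry g))
    (V : EuclideanSpace ℝ (Fin d) → ℝ) (hV_meas : Measurable V)
    (μβ : EuclideanSpace ℝ (Fin d) → ℝ) (hμβ_meas : Measurable μβ)
    (hμβ_prob : IsProbabilityMeasure (densMeasure d μβ))
    -- `g∗μ_β(x)` finite for every `x`:
    (hconvβ_int : ∀ x, Integrable (fun y => g x y) (densMeasure d μβ))
    (cβ : ℝ)
    -- the characterization `g∗μ_β + V + (1/β) log μ_β = c_β` everywhere (solved form):
    (hchar : ∀ x, μβ x = Real.exp (β * (cβ - V x - ∫ y, g x y ∂(densMeasure d μβ))))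
    (μ : EuclideanSpace ℝ (Fin d) → ℝ) (hμ_meas : Measurable μ)
    (hμ_prob : IsProbabilityMeasure (densMeasure d μ))
    (hμ_pos : ∀ᵐ x ∂(densMeasure d μ), 0 < μ x)
    -- `∬ |g| d(μ+μ_β) d(μ+μ_β) < ∞`:
    (hg_int : Integrable (Function.uncurry g)
      ((densMeasure d μ + densMeasure d μβ).prod (densMeasure d μ + densMeasure d μβ)))
    -- `∫ |V| dμ < ∞` and `∫ |V| dμ_β < ∞`:
    (hV_int : Integrable V (densMeasure d μ + densMeasure d μβ))
    -- `∫ μ|log μ| < ∞` and `∫ μ_β|log μ_β| < ∞`: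
    (hμlog_int : Integrable (fun x => Real.log (μ x)) (densMeasure d μ))
    (hμβlog_int : Integrable (fun x => Real.log (μβ x)) (densMeasure d μβ))
    -- `∫ |log(μ/μ_β)| dμ < ∞`:
    (hratio_int : Integrable (fun x => Real.log (μ x / μβ x)) (densMeasure d μ))
    -- `Z_{N,β}^V ∈ (0,∞)` for every `N ≥ 1`:
    (hZ_pos : ∀ N : ℕ, 1 ≤ N → 0 < Zpart d N β g V)
    (hZ_int : ∀ N : ℕ, 1 ≤ N → Integrable (fun X => Real.exp (-(β * HamN d N g V X)))
      (volume : Measure (Fin N → EuclideanSpace ℝ (Fin d))))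
    -- `(1/N) log K_{N,β}(μ_β) → 0`:
    (hK_lim : Filter.Tendsto
      (fun N : ℕ => Real.log (Kpart d N β g (densMeasure d μβ)) / N)
      Filter.atTop (nhds 0)) :
    Filter.Tendsto
      (fun N : ℕ => relEnt N (Measure.pi fun _ : Fin N => densMeasure d μ) (gibbs d N β g V))
      Filter.atTop (nhds (β * (meanFE d β g V μ - meanFE d β g V μβ))) := by
  classical
  set ρ := densMeasure d μ with hρdef
  set ρβ := densMeasure d μβ with hρβdef
  haveI : IsProbabilityMeasure ρ := hμ_prob
  haveI : IsProbabilityMeasure ρβ := hμβ_prob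
  have hμβ_pos : ∀ x, 0 < μβ x := fun x => (hchar x) ▸ Real.exp_pos _
  have hVρ : Integrable V ρ := (integrable_add_measure.mp hV_int).1
  have hVρβ : Integrable V ρβ := (integrable_add_measure.mp hV_int).2
  -- product measure domination
  have hexpand : (ρ + ρβ).prod (ρ + ρβ)
      = ρ.prod ρ + ρβ.prod ρ + (ρ.prod ρβ + ρβ.prod ρβ) := by
    rw [Measure.prod_add, Measure.add_prod, Measure.add_prod]
  have hgρρ : Integrable (Function.uncurry g) (ρ.prod ρ) := by
    refine hg_int.mono_measure ?_
    rw [hexpand]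
    exact Measure.le_add_right (Measure.le_add_right le_rfl)
  have hgρββ : Integrable (Function.uncurry g) (ρβ.prod ρβ) := by
    refine hg_int.mono_measure ?_
    rw [hexpand]
    exact Measure.le_add_left (Measure.le_add_left le_rfl)
  have hh_int : Integrable (fun x => ∫ y, g x y ∂ρβ) ρβ := hgρββ.integral_prod_left
  -- constants
  set Gμ := ∫ x, ∫ y, g x y ∂ρ ∂ρ with hGμ
  set Gβ := ∫ x, ∫ y, g x y ∂ρβ ∂ρβ with hGβ
  set Ilog := ∫ x, Real.log (μ x) ∂ρ with hIlog
  set IV := ∫ x, V x ∂ρ with hIV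
  set IVβ := ∫ x, V x ∂ρβ with hIVβ
  set c := β * (Gβ / 2 - cβ) with hc
  set L := Ilog + β * IV + β / 2 * Gμ + c with hL
  clear_value Gμ Gβ Ilog IV IVβ c L
  -- mean-field free energy of μβ
  have hIlogβ : ∫ x, Real.log (μβ x) ∂ρβ = β * (cβ - IVβ - Gβ) := by
    have h1 : (fun x => Real.log (μβ x))
        = fun x => β * (cβ - V x - ∫ y, g x y ∂ρβ) := by
      funext x; rw [hchar x, Real.log_exp]
    rw [h1, integral_const_mul,
      integral_sub (f := fun x => cβ - V x) (g := fun x => ∫ y, g x y ∂ρβ)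
        ((integrable_const cβ).sub hVρβ) hh_int,
      integral_sub (f := fun _ => cβ) (g := V) (integrable_const cβ) hVρβ, integral_const]
    simp [← hGβ, ← hIVβ]
  have hFEβ : meanFE d β g V μβ = cβ - Gβ / 2 := by
    unfold meanFE
    rw [← hρβdef, hIlogβ, ← hGβ, ← hIVβ]
    field_simp
    ring
  have hLtarget : L = β * (meanFE d β g V μ - meanFE d β g V μβ) := by
    rw [hFEβ]
    unfold meanFE
    rw [← hρdef, ← hGμ, ← hIV, ← hIlog, hL, hc]
    field_simp
    ring
  -- the per-N identity
  have key : ∀ N : ℕ, 1 ≤ N →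
      relEnt N (Measure.pi fun _ : Fin N => ρ) (gibbs d N β g V)
        = L - β * Gμ / 2 * (1 / (N : ℝ)) + Real.log (Kpart d N β g ρβ) / N := by
    intro N hN
    have hN0 : (N : ℝ) ≠ 0 := Nat.cast_ne_zero.mpr (by omega)
    have hZp : 0 < Zpart d N β g V := hZ_pos N hN
    haveI : IsProbabilityMeasure (Measure.pi fun _ : Fin N => ρ) := by infer_instance
    -- measurability
    have hgij : ∀ i j : Fin N,
        Measurable fun X : Fin N → EuclideanSpace ℝ (Fin d) => g (X i) (X j) := fun i j => by
      have h := hg_meas.comp ((measurable_pi_apply i).prodMk (measurable_pi_apply j) :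
        Measurable fun X : Fin N → EuclideanSpace ℝ (Fin d) => (X i, X j))
      exact h
    have hHam : Measurable (HamN d N g V) := by
      unfold HamN
      exact (Finset.measurable_sum _ fun i _ => hV_meas.comp (measurable_pi_apply i)).add
        (measurable_const.mul
          (Finset.measurable_sum _ fun i _ => Finset.measurable_sum _ fun j _ => hgij i j))
    have hq_meas : Measurable fun X : Fin N → EuclideanSpace ℝ (Fin d) =>
        ENNReal.ofReal (Real.exp (-(β * HamN d N g V X)) / Zpart d N β g V) :=
      (((measurable_const.mul hHam).neg.exp).div_const _).ennreal_ofReal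
    -- product densities
    haveI hSFμ : ∀ _i : Fin N, SigmaFinite
        ((volume : Measure (EuclideanSpace ℝ (Fin d))).withDensity fun x =>
          ENNReal.ofReal (μ x)) := fun _ =>
      (show SigmaFinite ρ from inferInstance)
    haveI hSFμβ : ∀ _i : Fin N, SigmaFinite
        ((volume : Measure (EuclideanSpace ℝ (Fin d))).withDensity fun x =>
          ENNReal.ofReal (μβ x)) := fun _ =>
      (show SigmaFinite ρβ from inferInstance)
    have hπ : (Measure.pi fun _ : Fin N => ρ)
        = (volume : Measure (Fin N → EuclideanSpace ℝ (Fin d))).withDensity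
            (fun X => ∏ i, ENNReal.ofReal (μ (X i))) := by
      rw [volume_pi]
      exact my_pi_withDensity (fun _ : Fin N => (volume : Measure (EuclideanSpace ℝ (Fin d))))
        (fun _ x => ENNReal.ofReal (μ x)) (fun _ => hμ_meas.ennreal_ofReal)
    have hπβ : (Measure.pi fun _ : Fin N => ρβ)
        = (volume : Measure (Fin N → EuclideanSpace ℝ (Fin d))).withDensity
            (fun X => ∏ i, ENNReal.ofReal (μβ (X i))) := by
      rw [volume_pi]
      exact my_pi_withDensity (fun _ : Fin N => (volume : Measure (EuclideanSpace ℝ (Fin d))))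
        (fun _ x => ENNReal.ofReal (μβ x)) (fun _ => hμβ_meas.ennreal_ofReal)
    -- Radon–Nikodym derivative
    have hrn : (Measure.pi fun _ : Fin N => ρ).rnDeriv (gibbs d N β g V) =ᵐ[volume]
        fun X => (ENNReal.ofReal (Real.exp (-(β * HamN d N g V X)) / Zpart d N β g V))⁻¹
          * (Measure.pi fun _ : Fin N => ρ).rnDeriv volume X :=
      Measure.rnDeriv_withDensity_right _ _ hq_meas.aemeasurable
        (Filter.Eventually.of_forall fun X =>
          (ENNReal.ofReal_pos.mpr (div_pos (Real.exp_pos _) hZp)).ne')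
        (Filter.Eventually.of_forall fun X => ENNReal.ofReal_ne_top)
    have hrnvol : (Measure.pi fun _ : Fin N => ρ).rnDeriv volume =ᵐ[volume]
        fun X => ∏ i, ENNReal.ofReal (μ (X i)) := by
      rw [hπ]
      exact Measure.rnDeriv_withDensity volume
        (Finset.measurable_prod _ fun i _ => (hμ_meas.comp (measurable_pi_apply i)).ennreal_ofReal)
    have hac : (Measure.pi fun _ : Fin N => ρ)
        ≪ (volume : Measure (Fin N → EuclideanSpace ℝ (Fin d))) := by
      rw [hπ]; exact withDensity_absolutelyContinuous _ _
    have hpos : ∀ᵐ X ∂(Measure.pi fun _ : Fin N => ρ), ∀ i, 0 < μ (X i) := by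
      rw [ae_all_iff]
      intro i
      have hnull : ρ {x | ¬ 0 < μ x} = 0 := by
        have := hμ_pos
        rwa [ae_iff] at this
      rw [ae_iff]
      exact Measure.pi_eval_preimage_null (μ := fun _ : Fin N => ρ) (i := i) hnull
    -- a.e. identity for the log
    have hlog : (fun X => Real.log (((Measure.pi fun _ : Fin N => ρ).rnDeriv
          (gibbs d N β g V) X).toReal))
        =ᵐ[Measure.pi fun _ : Fin N => ρ]
        fun X => (∑ i, Real.log (μ (X i)))
          + (β * HamN d N g V X + Real.log (Zpart d N β g V)) := by
      filter_upwards [hrn.filter_mono hac.ae_le, hrnvol.filter_mono hac.ae_le, hpos]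
        with X h1 h2 h3
      rw [h1, h2]
      have hprodpos : 0 < ∏ i, μ (X i) := Finset.prod_pos fun i _ => h3 i
      have hdivpos : 0 < Real.exp (-(β * HamN d N g V X)) / Zpart d N β g V :=
        div_pos (Real.exp_pos _) hZp
      have htr : (∏ i, ENNReal.ofReal (μ (X i))).toReal = ∏ i, μ (X i) := by
        rw [ENNReal.toReal_prod]
        exact Finset.prod_congr rfl fun i _ => ENNReal.toReal_ofReal (h3 i).le
      rw [ENNReal.toReal_mul, ENNReal.toReal_inv, ENNReal.toReal_ofReal hdivpos.le, htr,
        Real.log_mul (by positivity) hprodpos.ne', Real.log_inv,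
        Real.log_div (Real.exp_ne_zero _) hZp.ne', Real.log_exp,
        Real.log_prod fun i _ => (h3 i).ne']
      ring
    -- integrability over the product measure
    have hlogint : ∀ i : Fin N, Integrable
        (fun X : Fin N → EuclideanSpace ℝ (Fin d) => Real.log (μ (X i)))
        (Measure.pi fun _ : Fin N => ρ) := fun i =>
      my_integrable_eval _ i (Real.measurable_log.comp hμ_meas) hμlog_int
    have hVint : ∀ i : Fin N, Integrable
        (fun X : Fin N → EuclideanSpace ℝ (Fin d) => V (X i))
        (Measure.pi fun _ : Fin N => ρ) := fun i =>
      my_integrable_eval _ i hV_meas hVρ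
    have hpairint : ∀ (i j : Fin N), j ≠ i → Integrable
        (fun X : Fin N → EuclideanSpace ℝ (Fin d) => g (X i) (X j))
        (Measure.pi fun _ : Fin N => ρ) := fun i j hj =>
      my_integrable_pair _ (fun h => hj h.symm) hg_meas hgρρ
    have hint1 : Integrable (fun X : Fin N → EuclideanSpace ℝ (Fin d) =>
        ∑ i, Real.log (μ (X i))) (Measure.pi fun _ : Fin N => ρ) :=
      integrable_finset_sum _ fun i _ => hlogint i
    have hintV : Integrable (fun X : Fin N → EuclideanSpace ℝ (Fin d) =>
        ∑ i, V (X i)) (Measure.pi fun _ : Fin N => ρ) :=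
      integrable_finset_sum _ fun i _ => hVint i
    have hintS : Integrable (fun X : Fin N → EuclideanSpace ℝ (Fin d) =>
        ∑ i, ∑ j ∈ Finset.univ.erase i, g (X i) (X j)) (Measure.pi fun _ : Fin N => ρ) :=
      integrable_finset_sum _ fun i _ => integrable_finset_sum _ fun j hj =>
        hpairint i j (Finset.ne_of_mem_erase hj)
    have hintHam : Integrable (HamN d N g V) (Measure.pi fun _ : Fin N => ρ) := by
      unfold HamN
      exact hintV.add (hintS.const_mul _)
    -- values of the integrals
    have hpairval : ∀ (i j : Fin N), j ≠ i →
        ∫ X, g (X i) (X j) ∂(Measure.pi fun _ : Fin N => ρ) = Gμ := by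
      intro i j hj
      show ∫ X, Function.uncurry g (X i, X j) ∂(Measure.pi fun _ : Fin N => ρ) = Gμ
      rw [my_integral_pair _ (fun h => hj h.symm) hg_meas, integral_prod _ hgρρ]
      exact hGμ.symm
    have hI1 : ∫ X, ∑ i, Real.log (μ (X i)) ∂(Measure.pi fun _ : Fin N => ρ)
        = (N : ℝ) * Ilog := by
      rw [integral_finset_sum _ fun i _ => hlogint i]
      have h2 : ∀ i : Fin N,
          ∫ X, Real.log (μ (X i)) ∂(Measure.pi fun _ : Fin N => ρ) = Ilog := fun i =>
        (my_integral_eval _ i (Real.measurable_log.comp hμ_meas)).trans hIlog.symm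
      rw [Finset.sum_congr rfl fun i _ => h2 i, Finset.sum_const, Finset.card_univ,
        Fintype.card_fin, nsmul_eq_mul]
    have hI2 : ∫ X, ∑ i, V (X i) ∂(Measure.pi fun _ : Fin N => ρ) = (N : ℝ) * IV := by
      rw [integral_finset_sum _ fun i _ => hVint i]
      have h2 : ∀ i : Fin N,
          ∫ X, V (X i) ∂(Measure.pi fun _ : Fin N => ρ) = IV := fun i =>
        (my_integral_eval _ i hV_meas).trans hIV.symm
      rw [Finset.sum_congr rfl fun i _ => h2 i, Finset.sum_const, Finset.card_univ,
        Fintype.card_fin, nsmul_eq_mul]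
    have hI3 : ∫ X, ∑ i, ∑ j ∈ Finset.univ.erase i, g (X i) (X j)
          ∂(Measure.pi fun _ : Fin N => ρ) = (N : ℝ) * ((N : ℝ) - 1) * Gμ := by
      rw [integral_finset_sum _ fun i _ => integrable_finset_sum _ fun j hj =>
        hpairint i j (Finset.ne_of_mem_erase hj)]
      have h2 : ∀ i : Fin N, ∫ X, ∑ j ∈ Finset.univ.erase i, g (X i) (X j)
          ∂(Measure.pi fun _ : Fin N => ρ) = ((N : ℝ) - 1) * Gμ := by
        intro i
        rw [integral_finset_sum _ fun j hj => hpairint i j (Finset.ne_of_mem_erase hj)]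
        rw [Finset.sum_congr rfl fun j hj => hpairval i j (Finset.ne_of_mem_erase hj),
          Finset.sum_const, Finset.card_erase_of_mem (Finset.mem_univ i), Finset.card_univ,
          Fintype.card_fin, nsmul_eq_mul]
        rw [Nat.cast_sub hN, Nat.cast_one]
      rw [Finset.sum_congr rfl fun i _ => h2 i, Finset.sum_const, Finset.card_univ,
        Fintype.card_fin, nsmul_eq_mul, mul_assoc]
    -- Z = exp(Nc) * K
    have hKeq : Kpart d N β g ρβ = ∫ X : Fin N → EuclideanSpace ℝ (Fin d),
        (∏ i, μβ (X i)) * Real.exp (-(β * (N : ℝ) * modEnergy d N g ρβ X)) ∂volume := by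
      unfold Kpart
      rw [hπβ]
      have hd2 : (fun X : Fin N → EuclideanSpace ℝ (Fin d) =>
          ∏ i, ENNReal.ofReal (μβ (X i)))
          = fun X => ((∏ i, Real.toNNReal (μβ (X i)) : ℝ≥0) : ℝ≥0∞) := by
        funext X
        push_cast
        rfl
      rw [hd2, integral_withDensity_eq_integral_smul
        (f := fun X : Fin N → EuclideanSpace ℝ (Fin d) => ∏ i, Real.toNNReal (μβ (X i)))
        (Finset.measurable_prod _ fun i _ => by
          exact (hμβ_meas.comp (measurable_pi_apply i)).real_toNNReal) _]
      refine integral_congr_ae (Filter.Eventually.of_forall fun X => ?_)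
      dsimp only
      rw [NNReal.smul_def, smul_eq_mul, NNReal.coe_prod]
      congr 1
      exact Finset.prod_congr rfl fun i _ => Real.coe_toNNReal _ (hμβ_pos (X i)).le
    have hZK : Zpart d N β g V = Real.exp ((N : ℝ) * c) * Kpart d N β g ρβ := by
      rw [hKeq]
      unfold Zpart
      rw [← integral_const_mul]
      refine integral_congr_ae (Filter.Eventually.of_forall fun X => ?_)
      dsimp only
      have hprod : ∏ i, μβ (X i)
          = Real.exp (∑ i, β * (cβ - V (X i) - ∫ y, g (X i) y ∂ρβ)) := by
        rw [Real.exp_sum]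
        exact Finset.prod_congr rfl fun i _ => hchar (X i)
      rw [hprod, ← Real.exp_add, ← Real.exp_add]
      congr 1
      have hsum : ∑ i : Fin N, β * (cβ - V (X i) - ∫ y, g (X i) y ∂ρβ)
          = (N : ℝ) * (β * cβ) - β * (∑ i, V (X i))
            - β * (∑ i, ∫ y, g (X i) y ∂ρβ) := by
        simp only [mul_sub, Finset.sum_sub_distrib, Finset.sum_const, Finset.card_univ,
          Fintype.card_fin, nsmul_eq_mul, ← Finset.mul_sum]
      unfold HamN modEnergy
      rw [hsum, hc, ← hGβ]
      field_simp
      ring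
    have hKpos : 0 < Kpart d N β g ρβ := by
      have h : 0 < Real.exp ((N : ℝ) * c) * Kpart d N β g ρβ := by rw [← hZK]; exact hZp
      nlinarith [Real.exp_pos ((N : ℝ) * c)]
    have hlogZ : Real.log (Zpart d N β g V)
        = (N : ℝ) * c + Real.log (Kpart d N β g ρβ) := by
      rw [hZK, Real.log_mul (Real.exp_ne_zero _) hKpos.ne', Real.log_exp]
    -- the integral of the log
    have hrel : relEnt N (Measure.pi fun _ : Fin N => ρ) (gibbs d N β g V)
        = (1 / (N : ℝ)) * ((N : ℝ) * Ilog
          + (β * ((N : ℝ) * IV + 1 / (2 * (N : ℝ)) * ((N : ℝ) * ((N : ℝ) - 1) * Gμ))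
            + ((N : ℝ) * c + Real.log (Kpart d N β g ρβ)))) := by
      unfold relEnt
      congr 1
      rw [integral_congr_ae hlog,
        integral_add (f := fun X : Fin N → EuclideanSpace ℝ (Fin d) =>
            ∑ i, Real.log (μ (X i)))
          (g := fun X => β * HamN d N g V X + Real.log (Zpart d N β g V)) hint1
          (by exact (hintHam.const_mul β).add (integrable_const _)),
        integral_add (f := fun X => β * HamN d N g V X)
          (g := fun _ => Real.log (Zpart d N β g V))
          (by exact hintHam.const_mul β) (integrable_const _), integral_const]
      simp only [probReal_univ, one_smul]
      rw [integral_const_mul, hI1, hlogZ]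
      have hHamInt : ∫ X, HamN d N g V X ∂(Measure.pi fun _ : Fin N => ρ)
          = (N : ℝ) * IV + 1 / (2 * (N : ℝ)) * ((N : ℝ) * ((N : ℝ) - 1) * Gμ) := by
        unfold HamN
        rw [integral_add (f := fun X : Fin N → EuclideanSpace ℝ (Fin d) => ∑ i, V (X i))
          (g := fun X => 1 / (2 * (N : ℝ)) * ∑ i, ∑ j ∈ Finset.univ.erase i, g (X i) (X j))
          hintV (by exact hintS.const_mul _), integral_const_mul, hI2, hI3]
      rw [hHamInt]
    rw [hrel, hL]
    exact scalar_alg (N : ℝ) Ilog IV Gμ c (Real.log (Kpart d N β g ρβ)) β hN0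
  -- pass to the limit
  have hev : (fun N : ℕ => L - β * Gμ / 2 * (1 / (N : ℝ)) + Real.log (Kpart d N β g ρβ) / N)
      =ᶠ[Filter.atTop]
      (fun N : ℕ => relEnt N (Measure.pi fun _ : Fin N => ρ) (gibbs d N β g V)) := by
    filter_upwards [Filter.eventually_ge_atTop 1] with N hN using (key N hN).symm
  have hlim : Filter.Tendsto
      (fun N : ℕ => L - β * Gμ / 2 * (1 / (N : ℝ)) + Real.log (Kpart d N β g ρβ) / N)
      Filter.atTop (nhds (β * (meanFE d β g V μ - meanFE d β g V μβ))) := by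
    have h1 : Filter.Tendsto
        (fun N : ℕ => L - β * Gμ / 2 * (1 / (N : ℝ)) + Real.log (Kpart d N β g ρβ) / N)
        Filter.atTop (nhds (L - β * Gμ / 2 * 0 + 0)) :=
      (Filter.Tendsto.sub tendsto_const_nhds
        (tendsto_const_nhds.mul tendsto_one_div_atTop_nhds_zero_nat)).add hK_lim
    have h2 : L - β * Gμ / 2 * 0 + 0 = β * (meanFE d β g V μ - meanFE d β g V μβ) := by
      rw [← hLtarget]; ring
    rwa [h2] at h1
  exact hlim.congr' hev
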